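/- For every real t > 1, with μ = √((t−1)t) − (t−1), the following algebraic identity holds: μ(1−μ)·(μ²/(2(t−1)) + 1/2 − μ + μ²)^{−1} = √((t−1)/t). Consequently, in the case of conventional sparsity (m_max = m_min = 1), the sufficient condition δ < μ(1−μ)·(μ² m_max²/(2(t−1) m_min) + 1/2 − μ + μ²)^{−1} reduces exactly to δ < √((t−1)/t). -/

import Mathlib

open Finset

noncomputable section

namespace CS

/-- The ℓ1 norm of a vector. -/
def l1 {d : ℕ} (x : Fin d → ℝ) : ℝ := ∑ i, |x i|

/-- The ℓ2 (Euclidean) norm of a vector. -/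
def l2 {d : ℕ} (x : Fin d → ℝ) : ℝ := Real.sqrt (∑ i, (x i) ^ 2)

/-- The ℓp norm of a vector (for real p ≥ 1). -/
def lpnorm {d : ℕ} (p : ℝ) (x : Fin d → ℝ) : ℝ := (∑ i, |x i| ^ p) ^ (1 / p)

/-- `restrict Λ x` agrees with `x` on `Λ` and is zero elsewhere. -/
def restrict {d : ℕ} (Λ : Finset (Fin d)) (x : Fin d → ℝ) : Fin d → ℝ :=
  fun i => if i ∈ Λ then x i else 0

/-- The support of a vector. -/
def supp {d : ℕ} (x : Fin d → ℝ) : Finset (Fin d) :=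
  Finset.univ.filter fun i => x i ≠ 0

/-- `G : Fin g → Finset (Fin n)` is a partition of `{1,…,n}` into `g` (nonempty,
pairwise disjoint) groups covering everything. -/
def IsPartition {n g : ℕ} (G : Fin g → Finset (Fin n)) : Prop :=
  (∀ j, (G j).Nonempty) ∧
  (∀ j j', j ≠ j' → Disjoint (G j) (G j')) ∧
  Finset.univ.biUnion G = Finset.univ

/-- A subset `Λ ⊆ {1,…,n}` is group `k`-sparse: it is a union of groups and has
cardinality at most `k`. -/
def GroupSparseSet {n g : ℕ} (G : Fin g → Finset (Fin n)) (k : ℕ)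
    (Λ : Finset (Fin n)) : Prop :=
  (∃ S : Finset (Fin g), Λ = S.biUnion G) ∧ Λ.card ≤ k

/-- A vector is group `l`-sparse: its support is contained in a union of groups
of total cardinality at most `l`. -/
def GroupSparseVec {n g : ℕ} (G : Fin g → Finset (Fin n)) (l : ℕ)
    (z : Fin n → ℝ) : Prop :=
  ∃ S : Finset (Fin g), supp z ⊆ S.biUnion G ∧ (S.biUnion G).card ≤ l

/-- The group restricted isometry property of order `l` with constant `δ`. -/
def GRIP {m n g : ℕ} (A : Matrix (Fin m) (Fin n) ℝ) (G : Fin g → Finset (Fin n))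
    (l : ℕ) (δ : ℝ) : Prop :=
  ∀ z : Fin n → ℝ, GroupSparseVec G l z →
    (1 - δ) * (l2 z) ^ 2 ≤ (l2 (A.mulVec z)) ^ 2 ∧
    (l2 (A.mulVec z)) ^ 2 ≤ (1 + δ) * (l2 z) ^ 2

/-- The ℓ2 group robust null space property of order `k`
with constants `ρ`, `τ`. -/
def GRNSP {m n g : ℕ} (A : Matrix (Fin m) (Fin n) ℝ) (G : Fin g → Finset (Fin n))
    (k : ℕ) (ρ τ : ℝ) : Prop :=
  ∀ (h : Fin n → ℝ) (Λ : Finset (Fin n)), GroupSparseSet G k Λ →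
    l2 (restrict Λ h) ≤
      ρ / Real.sqrt k * l1 (restrict Λᶜ h) + τ / Real.sqrt k * l2 (A.mulVec h)

/-- The group `k`-sparsity index of `x` with respect to the ℓ1 norm:
`σ_{k,𝒢}(x, ‖·‖₁) = min_{Λ ∈ GkS} ‖x − x_Λ‖₁ = min_{Λ ∈ GkS} ‖x_{Λᶜ}‖₁`. -/
def gIndex {n g : ℕ} (G : Fin g → Finset (Fin n)) (k : ℕ) (x : Fin n → ℝ) : ℝ :=
  sInf {r | ∃ Λ : Finset (Fin n), GroupSparseSet G k Λ ∧ r = l1 (restrict Λᶜ x)}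

/-- The (conventional) restricted isometry property of order `l`
with constant `δ`. -/
def RIP {m n : ℕ} (A : Matrix (Fin m) (Fin n) ℝ) (l : ℕ) (δ : ℝ) : Prop :=
  ∀ u : Fin n → ℝ, (supp u).card ≤ l →
    (1 - δ) * (l2 u) ^ 2 ≤ (l2 (A.mulVec u)) ^ 2 ∧
    (l2 (A.mulVec u)) ^ 2 ≤ (1 + δ) * (l2 u) ^ 2

/-- The (conventional) `k`-sparsity index
`σ_k(x, ‖·‖₁) = min_{z k-sparse} ‖x − z‖₁`. -/
def sIndex {n : ℕ} (k : ℕ) (x : Fin n → ℝ) : ℝ :=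
  sInf {r | ∃ z : Fin n → ℝ, (supp z).card ≤ k ∧ r = l1 (x - z)}

/-- The group support of `v`: the set of groups on which `v` is nonzero. -/
def Gsupp {n g : ℕ} (G : Fin g → Finset (Fin n)) (v : Fin n → ℝ) :
    Finset (Fin g) :=
  Finset.univ.filter fun j => restrict (G j) v ≠ 0

/-- **the bound reduces to the Cai–Zhang bound `√((t−1)/t)` for
conventional sparsity, where `m_max = m_min = 1`.** -/
theorem bound_reduces_to_cai_zhang (t : ℝ) (ht : 1 < t) (μ : ℝ)
    (hμ : μ = Real.sqrt ((t - 1) * t) - (t - 1)) :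
    μ * (1 - μ) * (μ ^ 2 / (2 * (t - 1)) + 1 / 2 - μ + μ ^ 2)⁻¹ =
      Real.sqrt ((t - 1) / t) ∧
    ∀ δ : ℝ,
      (δ < μ * (1 - μ) *
          (μ ^ 2 * (1 : ℝ) ^ 2 / (2 * (t - 1) * 1) + 1 / 2 - μ + μ ^ 2)⁻¹ ↔
        δ < Real.sqrt ((t - 1) / t)) := by
  have ht0 : (0:ℝ) < t := lt_trans one_pos ht
  have ha : 0 < t - 1 := sub_pos.mpr ht
  set s := Real.sqrt ((t - 1) * t) with hsdef
  have hs2 : s ^ 2 = (t - 1) * t := Real.sq_sqrt (by positivity)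
  have hsnn : 0 ≤ s := Real.sqrt_nonneg _
  have hμpos : 0 < μ := by nlinarith [hs2, hsnn]
  have hsqrt : Real.sqrt ((t - 1) / t) = s / t := by
    rw [show (t - 1) / t = (s / t) ^ 2 by
      rw [div_pow, hs2]; field_simp]
    exact Real.sqrt_sq (by positivity)
  have hD : μ ^ 2 / (2 * (t - 1)) + 1 / 2 - μ + μ ^ 2 = t * μ ^ 2 / (t - 1) := by
    rw [hμ]
    field_simp
    ring_nf
    nlinarith [hs2]
  have hDpos : 0 < μ ^ 2 / (2 * (t - 1)) + 1 / 2 - μ + μ ^ 2 := by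
    rw [hD]; positivity
  have hmain : μ * (1 - μ) * (μ ^ 2 / (2 * (t - 1)) + 1 / 2 - μ + μ ^ 2)⁻¹ =
      Real.sqrt ((t - 1) / t) := by
    rw [hsqrt, hD]
    rw [hμ] at hμpos ⊢
    field_simp
    linear_combination (-1) * hs2
  refine ⟨hmain, fun δ => ?_⟩
  have : μ ^ 2 * (1 : ℝ) ^ 2 / (2 * (t - 1) * 1) = μ ^ 2 / (2 * (t - 1)) := by
    ring
  rw [this, hmain]

end CS
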